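/- Let p, q > 1 with 1/p + 1/q = 1 and p ≤ 2. Then for all x, y in a complex Hilbert space H, ‖x − y‖² + ‖(1−p)•x − y‖² ≤ p·‖x‖² + q·‖y‖². -/

import Mathlib

open RCLike Complex

theorem bohr_inequality_hirzallah {H : Type*} [NormedAddCommGroup H] [InnerProductSpace ℂ H]
    (p q : ℝ) (hp : 1 < p) (hq : 1 < q) (hpq : 1 / p + 1 / q = 1) (hp2 : p ≤ 2) :
    ∀ x y : H,
      ‖x - y‖ ^ 2 + ‖(1 - p) • x - y‖ ^ 2 ≤ p * ‖x‖ ^ 2 + q * ‖y‖ ^ 2 := by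
  intro x y
  have hpq' : p + q = p * q := by
    field_simp at hpq; linarith
  set a := ‖x‖ with ha
  set b := ‖y‖ with hb
  set r := Complex.re (inner ℂ x y : ℂ) with hr
  have h1 : ‖x - y‖ ^ 2 = a ^ 2 - 2 * r + b ^ 2 := by
    have := @norm_sub_sq ℂ H _ _ _ x y
    simpa using this
  have h2 : ‖(1 - p) • x - y‖ ^ 2 = (1 - p) ^ 2 * a ^ 2 - 2 * ((1 - p) * r) + b ^ 2 := by
    have := @norm_sub_sq ℂ H _ _ _ ((1 - p) • x) y
    have hn : ‖(1 - p) • x‖ ^ 2 = (1 - p) ^ 2 * a ^ 2 := by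
      rw [norm_smul]
      simp [mul_pow, sq_abs, ha]
    have hi : Complex.re (inner ℂ ((1 - p) • x) y : ℂ) = (1 - p) * r := by
      rw [RCLike.real_smul_eq_coe_smul (K := ℂ), inner_smul_left]
      simp [hr]
    rw [this, hn] at *
    simp only [RCLike.re_to_complex] at *
    rw [hi]
  have hab : |r| ≤ a * b := by
    calc |r| ≤ ‖(inner ℂ x y : ℂ)‖ := Complex.abs_re_le_norm _
    _ ≤ a * b := by simpa using norm_inner_le_norm (𝕜 := ℂ) x y
  have hrge : -(a * b) ≤ r := neg_le_of_abs_le hab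
  have hkey : 0 ≤ (2 - p) * ((p - 1) * a - b) ^ 2 :=
    mul_nonneg (by linarith) (sq_nonneg _)
  have hkey2 : 0 ≤ (2 - p) * (2 * (p - 1)) * (r + a * b) :=
    mul_nonneg (mul_nonneg (by linarith) (by linarith)) (by linarith)
  rw [h1, h2]
  have hp1 : 0 < p - 1 := by linarith
  rw [← sub_nonneg]
  have hfin : 0 ≤ (p - 1) * (p * a ^ 2 + q * b ^ 2 - ((a ^ 2 - 2 * r + b ^ 2) + ((1 - p) ^ 2 * a ^ 2 - 2 * ((1 - p) * r) + b ^ 2))) := by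
    nlinarith [hkey, hkey2, hpq']
  nlinarith [hfin, hp1]
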